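/- Let G be a simple undirected graph with no subgraph isomorphic to the complete bipartite graph K_{t,t}, and let X be a set of vertices whose bipartite adjacency matrix Adj_G[X, V∖X] has rank at most r over F_2. Then there exists a separation (L,R) of G of order at most 2^{r+1}(t-1) such that L∖R ⊆ X ⊆ L. -/

import Mathlib

/-- The bipartite adjacency matrix over F₂ between a vertex set `X` and its complement. -/
def cutMatrix {V : Type} [Fintype V] (G : SimpleGraph V) [DecidableRel G.Adj]
    (X : Finset V) : Matrix {v : V // v ∈ X} {v : V // v ∉ X} (ZMod 2) :=
  fun u w => if G.Adj u.1 w.1 then 1 else 0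

/-- In a graph with no K_{t,t} subgraph, every vertex set X whose
bipartite adjacency matrix has F₂-rank at most r is captured by a separation of
order at most 2^{r+1}(t-1). -/
theorem low_rank_set_captured_by_separation {V : Type} [Fintype V] [DecidableEq V]
    (G : SimpleGraph V) [DecidableRel G.Adj] (t r : ℕ)
    (hKtt : ¬ ∃ A B : Finset V, Disjoint A B ∧ A.card = t ∧ B.card = t ∧
      ∀ a ∈ A, ∀ b ∈ B, G.Adj a b)
    (X : Finset V) (hrk : (cutMatrix G X).rank ≤ r) :
    ∃ L R : Finset V, L ∪ R = Finset.univ ∧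
      (∀ u ∈ L \ R, ∀ v ∈ R \ L, ¬ G.Adj u v) ∧
      (L ∩ R).card ≤ 2 ^ (r + 1) * (t - 1) ∧
      L \ R ⊆ X ∧ X ⊆ L := by
  classical
  -- t = 0 is impossible
  rcases Nat.eq_zero_or_pos t with ht0 | ht
  · exact absurd ⟨∅, ∅, disjoint_bot_left, by simp [ht0], by simp [ht0], by simp⟩ hKtt
  -- row pattern of a vertex
  set g : V → ({v : V // v ∉ X} → ZMod 2) :=
    fun u w => if G.Adj u w.1 then 1 else 0 with hg
  -- external neighborhood
  set N : V → Finset V := fun u => Finset.univ.filter (fun v => v ∉ X ∧ G.Adj u v) with hN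
  have hNmem : ∀ u v, v ∈ N u ↔ (v ∉ X ∧ G.Adj u v) := by
    intro u v; simp [hN]
  have hgN : ∀ u u', g u = g u' → N u = N u' := by
    intro u u' h
    ext v
    simp only [hNmem]
    constructor
    · rintro ⟨hv, hadj⟩
      refine ⟨hv, ?_⟩
      have := congrFun h ⟨v, hv⟩
      simp only [hg, if_pos hadj] at this
      by_contra hne
      rw [if_neg hne] at this
      exact absurd this (by decide)
    · rintro ⟨hv, hadj⟩
      refine ⟨hv, ?_⟩
      have := congrFun h ⟨v, hv⟩
      simp only [hg, if_pos hadj] at this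
      by_contra hne
      rw [if_neg hne] at this
      exact absurd this (by decide)
  -- class of a pattern
  set cls : ({v : V // v ∉ X} → ZMod 2) → Finset V :=
    fun q => X.filter (fun u => g u = q) with hcls
  -- a big class forces a small common neighborhood
  have hbig : ∀ u ∈ X, t ≤ (cls (g u)).card → (N u).card ≤ t - 1 := by
    intro u hu hcard
    by_contra hbigN
    push_neg at hbigN
    have htN : t ≤ (N u).card := by omega
    obtain ⟨A, hA, hAcard⟩ := Finset.exists_subset_card_eq hcard
    obtain ⟨B, hB, hBcard⟩ := Finset.exists_subset_card_eq htN
    refine hKtt ⟨A, B, ?_, hAcard, hBcard, ?_⟩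
    · refine Finset.disjoint_left.2 fun v hvA hvB => ?_
      have hvX : v ∈ X := (Finset.mem_filter.1 (hA hvA)).1
      exact ((hNmem u v).1 (hB hvB)).1 hvX
    · intro a ha b hb
      have hga : g a = g u := (Finset.mem_filter.1 (hA ha)).2
      have : b ∈ N a := by rw [hgN a u hga]; exact hB hb
      exact ((hNmem a b).1 this).2
  -- the boundary pieces
  set B1 : Finset V := X.filter (fun u => N u ≠ ∅ ∧ (cls (g u)).card < t) with hB1
  set B2 : Finset V := (X.filter (fun u => t ≤ (cls (g u)).card)).biUnion N with hB2
  have hB1X : B1 ⊆ X := Finset.filter_subset _ _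
  have hB2X : ∀ v ∈ B2, v ∉ X := by
    intro v hv
    obtain ⟨u, _, hvN⟩ := Finset.mem_biUnion.1 hv
    exact ((hNmem u v).1 hvN).1
  refine ⟨X ∪ B2, Xᶜ ∪ B1, ?_, ?_, ?_, ?_, Finset.subset_union_left⟩
  · apply Finset.eq_univ_of_forall
    intro v
    simp only [Finset.mem_union, Finset.mem_compl]
    by_cases h : v ∈ X
    · exact Or.inl (Or.inl h)
    · exact Or.inr (Or.inl h)
  · -- no edges across
    intro u hu v hv hadj
    simp only [Finset.mem_sdiff, Finset.mem_union, Finset.mem_compl] at hu hv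
    obtain ⟨hu1, hu2⟩ := hu
    obtain ⟨hv1, hv2⟩ := hv
    push_neg at hu2 hv2
    have huX : u ∈ X := by
      rcases hu1 with h | h
      · exact h
      · exact absurd (hB2X u h) (by simpa using hu2.1)
    have hvX : v ∉ X := by
      rcases hv1 with h | h
      · exact h
      · exact absurd (hB1X h) hv2.1
    have hvN : v ∈ N u := (hNmem u v).2 ⟨hvX, hadj⟩
    have hnB1 : u ∉ B1 := hu2.2
    have hne : N u ≠ ∅ := Finset.ne_empty_of_mem hvN
    have hcard : t ≤ (cls (g u)).card := by
      by_contra hlt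
      push_neg at hlt
      exact hnB1 (Finset.mem_filter.2 ⟨huX, hne, hlt⟩)
    have : v ∈ B2 := Finset.mem_biUnion.2 ⟨u, Finset.mem_filter.2 ⟨huX, hcard⟩, hvN⟩
    exact hv2.2 this
  · -- cardinality bound
    have hinter : (X ∪ B2) ∩ (Xᶜ ∪ B1) ⊆ B1 ∪ B2 := by
      intro v hv
      simp only [Finset.mem_inter, Finset.mem_union, Finset.mem_compl] at hv
      obtain ⟨h1, h2⟩ := hv
      rcases h1 with h1 | h1
      · rcases h2 with h2 | h2
        · exact absurd h1 h2
        · exact Finset.mem_union_left _ h2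
      · exact Finset.mem_union_right _ h1
    -- the set of nonzero patterns
    set P : Finset ({v : V // v ∉ X} → ZMod 2) :=
      (X.filter (fun u => N u ≠ ∅)).image g with hP
    -- cover B1 ∪ B2 by pattern pieces
    set F : ({v : V // v ∉ X} → ZMod 2) → Finset V :=
      fun q => if t ≤ (cls q).card then (cls q).sup N else cls q with hF
    have hcover : B1 ∪ B2 ⊆ P.biUnion F := by
      intro v hv
      rcases Finset.mem_union.1 hv with hv | hv
      · obtain ⟨hvX, hne, hlt⟩ := Finset.mem_filter.1 hv
        refine Finset.mem_biUnion.2 ⟨g v, Finset.mem_image_of_mem g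
          (Finset.mem_filter.2 ⟨hvX, hne⟩), ?_⟩
        rw [hF]
        simp only [if_neg (by omega : ¬ t ≤ (cls (g v)).card)]
        exact Finset.mem_filter.2 ⟨hvX, rfl⟩
      · obtain ⟨u, hu, hvN⟩ := Finset.mem_biUnion.1 hv
        obtain ⟨huX, hcard⟩ := Finset.mem_filter.1 hu
        have hne : N u ≠ ∅ := Finset.ne_empty_of_mem hvN
        refine Finset.mem_biUnion.2 ⟨g u, Finset.mem_image_of_mem g
          (Finset.mem_filter.2 ⟨huX, hne⟩), ?_⟩
        rw [hF]
        simp only [if_pos hcard]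
        have hucls : u ∈ cls (g u) := Finset.mem_filter.2 ⟨huX, rfl⟩
        exact Finset.le_sup (f := N) hucls hvN
    -- each piece is small
    have hpiece : ∀ q ∈ P, (F q).card ≤ t - 1 := by
      intro q hq
      obtain ⟨u, hu, hqu⟩ := Finset.mem_image.1 hq
      obtain ⟨huX, hne⟩ := Finset.mem_filter.1 hu
      rw [hF]
      by_cases hc : t ≤ (cls q).card
      · simp only [if_pos hc]
        have hsup : (cls q).sup N = N u := by
          apply le_antisymm
          · refine Finset.sup_le fun u' hu' => ?_
            obtain ⟨hu'X, hgu'⟩ := Finset.mem_filter.1 hu'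
            rw [hgN u' u (hgu'.trans hqu.symm)]
          · exact Finset.le_sup (Finset.mem_filter.2 ⟨huX, hqu⟩)
        rw [hsup]
        exact hbig u huX (by rwa [hqu])
      · simp only [if_neg hc]
        omega
    -- the number of patterns is at most 2^r
    have hPW : ∀ q ∈ P, q ∈ Submodule.span (ZMod 2) (Set.range (cutMatrix G X)) := by
      intro q hq
      obtain ⟨u, hu, hqu⟩ := Finset.mem_image.1 hq
      have huX : u ∈ X := (Finset.mem_filter.1 hu).1
      have : q = cutMatrix G X ⟨u, huX⟩ := by
        rw [← hqu]; rfl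
      rw [this]
      exact Submodule.subset_span ⟨⟨u, huX⟩, rfl⟩
    have hPcard : P.card ≤ 2 ^ r := by
      set W := Submodule.span (ZMod 2) (Set.range (cutMatrix G X)) with hW
      have hfr : Module.finrank (ZMod 2) W ≤ r := by
        have := (cutMatrix G X).rank_eq_finrank_span_row
        change _ = Module.finrank (ZMod 2) W at this
        omega
      have hWcard : Fintype.card W = 2 ^ Module.finrank (ZMod 2) W := by
        have := Module.card_eq_pow_finrank (K := ZMod 2) (V := W)
        simpa [ZMod.card] using this
      calc P.card ≤ Fintype.card W := by
            rw [← Finset.card_univ]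
            refine Finset.card_le_card_of_injOn (fun q => if h : q ∈ W then ⟨q, h⟩ else 0)
              (fun q hq => Finset.mem_univ _) ?_
            intro q1 h1 q2 h2 h
            simp only [dif_pos (hPW q1 h1), dif_pos (hPW q2 h2)] at h
            exact congrArg Subtype.val h
        _ = 2 ^ Module.finrank (ZMod 2) W := hWcard
        _ ≤ 2 ^ r := Nat.pow_le_pow_right (by norm_num) hfr
    calc ((X ∪ B2) ∩ (Xᶜ ∪ B1)).card ≤ (P.biUnion F).card :=
          Finset.card_le_card (le_trans hinter hcover)
      _ ≤ ∑ q ∈ P, (F q).card := Finset.card_biUnion_le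
      _ ≤ ∑ _q ∈ P, (t - 1) := Finset.sum_le_sum hpiece
      _ = P.card * (t - 1) := by rw [Finset.sum_const, smul_eq_mul]
      _ ≤ 2 ^ r * (t - 1) := Nat.mul_le_mul_right _ hPcard
      _ ≤ 2 ^ (r + 1) * (t - 1) :=
          Nat.mul_le_mul_right _ (Nat.pow_le_pow_right (by norm_num) (by omega))
  · -- L \ R ⊆ X
    intro v hv
    simp only [Finset.mem_sdiff, Finset.mem_union, Finset.mem_compl] at hv
    obtain ⟨h1, h2⟩ := hv
    push_neg at h2
    rcases h1 with h | h
    · exact h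
    · exact absurd (hB2X v h) (by simpa using h2.1)
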